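/- Let ε, K > 0 be constants with ε ≤ K, and let p = p(n) satisfy ε/n ≤ p(n) ≤ K/n for all n. Then asymptotically almost surely the random graph G ~ G(n,p) has at least (ε/2)·e^{−2K}·n vertices of degree exactly 1, and consequently asymptotically almost surely D(G) ≤ ( 1 − (ε/4)·e^{−2K} )·n. -/

import Mathlib

open MeasureTheory Filter
open scoped Classical
open Finset
set_option maxHeartbeats 1000000

/-- The Bernoulli measure on `Bool` with success probability `p` (clamped to `[0,1]`). -/
noncomputable def bernoulliMeasure (p : ℝ) : Measure Bool :=
  (PMF.bernoulli (min (Real.toNNReal p) 1) (min_le_right _ _)).toMeasure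

instance (p : ℝ) : IsProbabilityMeasure (bernoulliMeasure p) :=
  PMF.toMeasure.isProbabilityMeasure _

/-- The Erdős–Rényi measure `G(n,p)`: every potential edge (pair of vertices of `Fin n`)
is present independently with probability `p`.  A sample point is an indicator function
on `Sym2 (Fin n)` (diagonal coordinates are simply ignored). -/
noncomputable def gnp (n : ℕ) (p : ℝ) : Measure (Sym2 (Fin n) → Bool) :=
  Measure.pi fun _ => bernoulliMeasure p

/-- The simple graph determined by an edge-indicator function. -/
def graphOf {n : ℕ} (f : Sym2 (Fin n) → Bool) : SimpleGraph (Fin n) where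
  Adj v w := v ≠ w ∧ f s(v, w) = true
  symm := by
    constructor
    intro v w h
    exact ⟨Ne.symm h.1, by rw [Sym2.eq_swap]; exact h.2⟩
  loopless := ⟨fun v h => h.1 rfl⟩

/-- A set `S` of vertices is dominating if every vertex is in `S` or adjacent to a member
of `S`. -/
def IsDominating {n : ℕ} (G : SimpleGraph (Fin n)) (S : Set (Fin n)) : Prop :=
  ∀ v, v ∈ S ∨ ∃ u ∈ S, G.Adj u v

/-- The domination number: the smallest cardinality of a dominating set. -/
noncomputable def domNumber {n : ℕ} (G : SimpleGraph (Fin n)) : ℕ :=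
  sInf {r | ∃ S : Finset (Fin n), S.card = r ∧ IsDominating G ↑S}

/-- The number of dominating sets of size `r`. -/
noncomputable def numDomSets {n : ℕ} (G : SimpleGraph (Fin n)) (r : ℕ) : ℕ :=
  ((Finset.powersetCard r (Finset.univ : Finset (Fin n))).filter
    (fun S => IsDominating G ↑S)).card

/-- The expected number of dominating sets of size `r` in `G(n,p)`:
`E(X_r) = C(n,r) (1-(1-p)^r)^(n-r)`. -/
noncomputable def EX (n r : ℕ) (p : ℝ) : ℝ :=
  (n.choose r : ℝ) * (1 - (1 - p) ^ r) ^ (n - r)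

/-- The critical size `r̂ = min{ r | E(X_r) ≥ 1/d } - 1`, where `d = np`. -/
noncomputable def rhat (n : ℕ) (p : ℝ) : ℕ :=
  sInf {r : ℕ | EX n r p ≥ 1 / (n * p)} - 1


section aux
instance (n : ℕ) (p : ℝ) : IsProbabilityMeasure (gnp n p) := by
  unfold gnp; infer_instance

section calc1
variable {q : ℝ}

lemma bern_true (hq1 : q ≤ 1) : bernoulliMeasure q {true} = ENNReal.ofReal q := by
  rw [bernoulliMeasure, PMF.toMeasure_apply_singleton _ _ (measurableSet_singleton _)]
  rw [PMF.bernoulli_apply, min_eq_left (Real.toNNReal_le_one.2 hq1)]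
  rfl

lemma bern_false (hq0 : 0 ≤ q) (hq1 : q ≤ 1) :
    bernoulliMeasure q {false} = ENNReal.ofReal (1-q) := by
  rw [bernoulliMeasure, PMF.toMeasure_apply_singleton _ _ (measurableSet_singleton _)]
  simp only [PMF.bernoulli_apply, Bool.cond_false, min_eq_left (Real.toNNReal_le_one.2 hq1)]
  rw [ENNReal.ofReal_sub _ hq0, ENNReal.ofReal_one, ENNReal.coe_sub, ENNReal.coe_one]
  rfl

/-- real weight of an outcome -/
noncomputable def W {n : ℕ} (q : ℝ) (f : Sym2 (Fin n) → Bool) : ℝ :=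
  ∏ e : Sym2 (Fin n), (if f e then q else 1 - q)

lemma W_nonneg {n : ℕ} (hq0 : 0 ≤ q) (hq1 : q ≤ 1) (f : Sym2 (Fin n) → Bool) : 0 ≤ W q f :=
  Finset.prod_nonneg fun e _ => by split <;> linarith

lemma gnp_singleton {n : ℕ} (hq0 : 0 ≤ q) (hq1 : q ≤ 1) (f : Sym2 (Fin n) → Bool) :
    gnp n q {f} = ENNReal.ofReal (W q f) := by
  have h1 : ({f} : Set (Sym2 (Fin n) → Bool)) = Set.pi Set.univ (fun e => {f e}) := by
    ext g; constructor
    · rintro rfl; simp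
    · intro h; have := funext fun e => h e (Set.mem_univ e); simp_all
  rw [h1, gnp, Measure.pi_pi, W, ENNReal.ofReal_prod_of_nonneg
    (fun e _ => by split <;> linarith)]
  refine Finset.prod_congr rfl fun e _ => ?_
  cases h : f e <;> simp [h, bern_true hq1, bern_false hq0 hq1]

lemma gnp_set {n : ℕ} (hq0 : 0 ≤ q) (hq1 : q ≤ 1) (S : Set (Sym2 (Fin n) → Bool)) :
    gnp n q S = ENNReal.ofReal (∑ f ∈ Finset.univ.filter (· ∈ S), W q f) := by
  have h1 : S = ⋃ f ∈ (Finset.univ.filter (· ∈ S) : Finset (Sym2 (Fin n) → Bool)), {f} := by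
    ext g; simp
  conv_lhs => rw [h1]
  rw [measure_biUnion_finset ?_ (fun f _ => (Set.finite_singleton f).measurableSet),
    ENNReal.ofReal_sum_of_nonneg (fun f _ => W_nonneg hq0 hq1 f)]
  · exact Finset.sum_congr rfl fun f _ => gnp_singleton hq0 hq1 f
  · intro a _ b _ hab
    simp [Function.onFun, Set.disjoint_singleton, hab]

lemma gnp_cylinder {n : ℕ} (hq0 : 0 ≤ q) (hq1 : q ≤ 1)
    (T F : Finset (Sym2 (Fin n))) (hTF : Disjoint T F) :
    gnp n q {f | (∀ e ∈ T, f e = true) ∧ (∀ e ∈ F, f e = false)} =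
      ENNReal.ofReal q ^ T.card * ENNReal.ofReal (1-q) ^ F.card := by
  have h1 : {f : Sym2 (Fin n) → Bool | (∀ e ∈ T, f e = true) ∧ (∀ e ∈ F, f e = false)} =
      Set.pi Set.univ (fun e => if e ∈ T then {true} else if e ∈ F then {false}
        else Set.univ) := by
    ext g
    simp only [Set.mem_setOf_eq, Set.mem_pi, Set.mem_univ, forall_true_left]
    constructor
    · rintro ⟨h2, h3⟩ e
      by_cases hT : e ∈ T
      · simp [hT, h2 e hT]
      · by_cases hF : e ∈ F
        · simp [hT, hF, h3 e hF]
        · simp [hT, hF]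
    · intro h2
      constructor
      · intro e he; have := h2 e; simpa [he] using this
      · intro e he
        have hT : e ∉ T := fun h => (hTF.forall_ne_finset h he) rfl
        have := h2 e; simpa [hT, he] using this
  rw [h1, gnp, Measure.pi_pi]
  have h2 : ∀ e ∈ (Finset.univ : Finset (Sym2 (Fin n))), e ∉ T ∪ F →
      bernoulliMeasure q (if e ∈ T then {true} else if e ∈ F then {false} else Set.univ)
        = 1 := by
    intro e _ he
    simp only [Finset.mem_union, not_or] at he
    rw [if_neg he.1, if_neg he.2]; exact measure_univ
  rw [← Finset.prod_subset (Finset.subset_univ (T ∪ F)) h2, Finset.prod_union hTF]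
  have hT' : ∀ e ∈ T, bernoulliMeasure q (if e ∈ T then ({true} : Set Bool)
      else if e ∈ F then {false} else Set.univ) = ENNReal.ofReal q := by
    intro e he; rw [if_pos he, bern_true hq1]
  have hF' : ∀ e ∈ F, bernoulliMeasure q (if e ∈ T then ({true} : Set Bool)
      else if e ∈ F then {false} else Set.univ) = ENNReal.ofReal (1-q) := by
    intro e he
    have hnT : e ∉ T := fun h => (hTF.forall_ne_finset h he) rfl
    rw [if_neg hnT, if_pos he, bern_false hq0 hq1]
  rw [Finset.prod_congr rfl hT', Finset.prod_congr rfl hF']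
  simp
end calc1

section events
variable {n : ℕ} {q : ℝ}

/-- degree of `v` -/
noncomputable def degCount {n : ℕ} (f : Sym2 (Fin n) → Bool) (v : Fin n) : ℕ :=
  (Finset.univ.filter (fun w : Fin n => (graphOf f).Adj v w)).card

/-- cylinder set -/
def cylSet {n : ℕ} (T F : Finset (Sym2 (Fin n))) : Set (Sym2 (Fin n) → Bool) :=
  {f | (∀ e ∈ T, f e = true) ∧ (∀ e ∈ F, f e = false)}

/-- edges at `v` -/
noncomputable def Ev (n : ℕ) (v : Fin n) : Finset (Sym2 (Fin n)) :=
  (Finset.univ.erase v).image (fun w => s(v,w))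

lemma mem_Ev {v : Fin n} {e : Sym2 (Fin n)} :
    e ∈ Ev n v ↔ ∃ w, w ≠ v ∧ e = s(v,w) := by
  simp only [Ev, Finset.mem_image, Finset.mem_erase, Finset.mem_univ, and_true]
  exact ⟨fun ⟨w, hw, he⟩ => ⟨w, hw, he.symm⟩, fun ⟨w, hw, he⟩ => ⟨w, hw, he.symm⟩⟩

lemma card_Ev (v : Fin n) : (Ev n v).card = n - 1 := by
  rw [Ev, Finset.card_image_of_injOn, Finset.card_erase_of_mem (Finset.mem_univ v),
    Finset.card_univ, Fintype.card_fin]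
  intro a ha b hb hab
  simp only [Finset.mem_coe, Finset.mem_erase] at ha hb
  exact (Sym2.congr_right).1 hab

lemma svw_mem_Ev {v w : Fin n} (h : w ≠ v) : s(v,w) ∈ Ev n v := mem_Ev.2 ⟨w, h, rfl⟩

lemma Dv_eq (v : Fin n) : {f : Sym2 (Fin n) → Bool | degCount f v = 1} =
    ⋃ w ∈ (Finset.univ.erase v : Finset (Fin n)),
      cylSet {s(v,w)} ((Ev n v).erase s(v,w)) := by
  ext f
  simp only [Set.mem_setOf_eq, Set.mem_iUnion, Finset.mem_erase, Finset.mem_univ, and_true,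
    exists_prop, cylSet, Finset.mem_singleton, forall_eq]
  constructor
  · intro h1
    obtain ⟨w, hw⟩ := Finset.card_eq_one.1 h1
    have hwmem : w ∈ Finset.univ.filter (fun w => (graphOf f).Adj v w) := by
      rw [hw]; exact Finset.mem_singleton_self w
    rw [Finset.mem_filter] at hwmem
    obtain ⟨-, hvw, hfw⟩ := hwmem
    refine ⟨w, Ne.symm hvw, hfw, ?_⟩
    intro e he
    obtain ⟨hne, hEv⟩ := he
    rw [mem_Ev] at hEv
    obtain ⟨x, hxv, rfl⟩ := hEv
    by_contra hfe
    have hx : x ∈ Finset.univ.filter (fun w => (graphOf f).Adj v w) := by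
      rw [Finset.mem_filter]
      exact ⟨Finset.mem_univ x, Ne.symm hxv, by simpa using hfe⟩
    rw [hw, Finset.mem_singleton] at hx
    exact hne (by rw [hx])
  · rintro ⟨w, hwv, hfw, hrest⟩
    rw [degCount, Finset.card_eq_one]
    refine ⟨w, ?_⟩
    ext x
    simp only [Finset.mem_filter, Finset.mem_univ, true_and, Finset.mem_singleton]
    constructor
    · rintro ⟨hvx, hfx⟩
      by_contra hxw
      have hmem : s(v,x) ≠ s(v,w) ∧ s(v,x) ∈ Ev n v := by
        refine ⟨?_, svw_mem_Ev (Ne.symm hvx)⟩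
        intro hcon
        exact hxw ((Sym2.congr_right).1 hcon)
      rw [hrest _ hmem] at hfx
      exact Bool.false_ne_true hfx
    · rintro rfl
      exact ⟨Ne.symm hwv, hfw⟩

lemma mu_Dv (hq0 : 0 ≤ q) (hq1 : q ≤ 1) (v : Fin n) :
    gnp n q {f | degCount f v = 1} =
      (n - 1 : ℕ) * (ENNReal.ofReal q * ENNReal.ofReal (1-q) ^ (n-2)) := by
  rw [Dv_eq v, measure_biUnion_finset ?disj (fun w _ => (Set.toFinite _).measurableSet)]
  · have hval : ∀ w ∈ Finset.univ.erase v,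
        gnp n q (cylSet {s(v,w)} ((Ev n v).erase s(v,w))) =
          ENNReal.ofReal q * ENNReal.ofReal (1-q) ^ (n-2) := by
      intro w hw
      rw [Finset.mem_erase] at hw
      have hdisj : Disjoint ({s(v,w)} : Finset (Sym2 (Fin n))) ((Ev n v).erase s(v,w)) := by
        simp [Finset.disjoint_singleton_left]
      rw [cylSet, gnp_cylinder hq0 hq1 _ _ hdisj, Finset.card_singleton,
        Finset.card_erase_of_mem (svw_mem_Ev hw.1), card_Ev, pow_one]
      rfl
    rw [Finset.sum_congr rfl hval, Finset.sum_const, Finset.card_erase_of_mem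
      (Finset.mem_univ v), Finset.card_univ, Fintype.card_fin, nsmul_eq_mul]
  case disj =>
    intro a ha b hb hab
    simp only [Function.onFun]
    rw [Set.disjoint_left]
    rintro f ⟨hfa1, hfa2⟩ ⟨hfb1, hfb2⟩
    simp only [Finset.mem_erase, Finset.mem_univ, and_true, Finset.mem_coe] at ha hb
    have hmem : s(v,b) ∈ (Ev n v).erase s(v,a) := by
      rw [Finset.mem_erase]
      exact ⟨fun h => hab.symm ((Sym2.congr_right).1 h), svw_mem_Ev hb⟩
    have := hfa2 _ hmem
    have h2 := hfb1 _ (Finset.mem_singleton_self _)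
    rw [this] at h2
    exact Bool.false_ne_true h2

end events

section pairs
variable {n : ℕ} {q : ℝ}

lemma two_le_of_ne {v u : Fin n} (hvu : v ≠ u) : 2 ≤ n := by
  by_contra h
  interval_cases n
  · exact Fin.elim0 v
  · exact hvu (Subsingleton.elim v u)

lemma Ev_inter {v u : Fin n} (hvu : v ≠ u) : Ev n v ∩ Ev n u = {s(v,u)} := by
  ext e
  simp only [Finset.mem_inter, mem_Ev, Finset.mem_singleton]
  constructor
  · rintro ⟨⟨w, hwv, rfl⟩, ⟨x, hxu, hx⟩⟩
    rw [Sym2.eq_iff] at hx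
    rcases hx with ⟨rfl, rfl⟩ | ⟨rfl, rfl⟩
    · exact absurd rfl hvu
    · rfl
  · rintro rfl
    exact ⟨⟨u, hvu.symm, rfl⟩, ⟨v, hvu, Sym2.eq_swap⟩⟩

lemma card_Evu {v u : Fin n} (hvu : v ≠ u) : (Ev n v ∪ Ev n u).card = 2*n - 3 := by
  have h1 := Finset.card_union_add_card_inter (Ev n v) (Ev n u)
  rw [Ev_inter hvu, card_Ev, card_Ev, Finset.card_singleton] at h1
  have hn := two_le_of_ne hvu
  omega

lemma svw_ne_sux {v u w x : Fin n} (hvu : v ≠ u) (hwu : w ≠ u) : s(v,w) ≠ s(u,x) := by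
  rw [Ne, Sym2.eq_iff]
  rintro (⟨rfl, rfl⟩ | ⟨rfl, rfl⟩)
  · exact hvu rfl
  · exact hwu rfl

lemma mu_pair_le (hq0 : 0 ≤ q) (hq1 : q ≤ 1) {v u : Fin n} (hvu : v ≠ u) :
    gnp n q ({f | degCount f v = 1} ∩ {f | degCount f u = 1}) ≤
      ENNReal.ofReal q * ENNReal.ofReal (1-q) ^ (2*n-4) +
      ((n-2 : ℕ))^2 * (ENNReal.ofReal q ^ 2 * ENNReal.ofReal (1-q) ^ (2*n-5)) := by
  classical
  have hn := two_le_of_ne hvu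
  set Evu := Ev n v ∪ Ev n u with hEvu
  set s : Finset (Fin n) := (Finset.univ.erase v).erase u with hs
  have hmem_s : ∀ y : Fin n, y ∈ s ↔ y ≠ u ∧ y ≠ v := by
    intro y
    simp [hs, Finset.mem_erase]
  have hcards : s.card = n - 2 := by
    rw [hs, Finset.card_erase_of_mem (Finset.mem_erase.2 ⟨hvu.symm, Finset.mem_univ u⟩),
      Finset.card_erase_of_mem (Finset.mem_univ v), Finset.card_univ, Fintype.card_fin]
    omega
  have hsvu_mem : s(v,u) ∈ Evu := Finset.mem_union_left _ (svw_mem_Ev hvu.symm)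
  -- the subset step
  have hsub : {f : Sym2 (Fin n) → Bool | degCount f v = 1} ∩ {f | degCount f u = 1} ⊆
      cylSet {s(v,u)} (Evu.erase s(v,u)) ∪
        ⋃ w ∈ s, ⋃ x ∈ s, cylSet {s(v,w), s(u,x)} ((Evu.erase s(v,w)).erase s(u,x)) := by
    rintro f ⟨hfv, hfu⟩
    rw [Dv_eq] at hfv hfu
    simp only [Set.mem_iUnion, Finset.mem_erase, Finset.mem_univ, and_true, exists_prop]
      at hfv hfu
    obtain ⟨w, hwv, hw1, hw2⟩ := hfv
    obtain ⟨x, hxu, hx1, hx2⟩ := hfu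
    simp only [cylSet, Finset.mem_singleton, forall_eq, Set.mem_setOf_eq] at hw1 hw2 hx1 hx2
    by_cases hwu : w = u
    · rw [hwu] at hw1 hw2
      -- then x = v
      have hxv : x = v := by
        by_contra hxv
        have hfalse : f s(u,v) = false := by
          refine hx2 _ (Finset.mem_erase.2 ⟨?_, svw_mem_Ev hvu⟩)
          intro hcon2
          exact hxv ((Sym2.congr_right).1 hcon2).symm
        rw [Sym2.eq_swap] at hfalse
        rw [hfalse] at hw1
        exact Bool.false_ne_true hw1
      rw [hxv] at hx1 hx2
      left
      refine ⟨fun e he => by rwa [Finset.mem_singleton.1 he], ?_⟩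
      intro e he
      rw [Finset.mem_erase, hEvu, Finset.mem_union] at he
      obtain ⟨hne, hmem | hmem⟩ := he
      · exact hw2 e (Finset.mem_erase.2 ⟨hne, hmem⟩)
      · refine hx2 e (Finset.mem_erase.2 ⟨?_, hmem⟩)
        intro hcon
        exact hne (by rw [hcon, Sym2.eq_swap])
    · -- w ≠ u, derive x ≠ v
      have hxv : x ≠ v := by
        intro h
        rw [h] at hx1
        have hfalse : f s(v,u) = false := by
          refine hw2 _ (Finset.mem_erase.2 ⟨?_, svw_mem_Ev hvu.symm⟩)
          intro hcon
          exact hwu ((Sym2.congr_right).1 hcon).symm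
        rw [Sym2.eq_swap] at hx1
        rw [hfalse] at hx1
        exact Bool.false_ne_true hx1
      right
      rw [Set.mem_iUnion]
      refine ⟨w, Set.mem_iUnion.2 ⟨(hmem_s w).2 ⟨hwu, hwv⟩, Set.mem_iUnion.2
        ⟨x, Set.mem_iUnion.2 ⟨(hmem_s x).2 ⟨hxu, hxv⟩, ?_⟩⟩⟩⟩
      refine ⟨?_, ?_⟩
      · intro e he
        rw [Finset.mem_insert, Finset.mem_singleton] at he
        rcases he with rfl | rfl
        · exact hw1
        · exact hx1
      · intro e he
        rw [Finset.mem_erase, Finset.mem_erase, hEvu, Finset.mem_union] at he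
        obtain ⟨hne1, hne2, hmem | hmem⟩ := he
        · exact hw2 e (Finset.mem_erase.2 ⟨hne2, hmem⟩)
        · exact hx2 e (Finset.mem_erase.2 ⟨hne1, hmem⟩)
  -- measure computation
  refine le_trans (measure_mono hsub) (le_trans (measure_union_le _ _) ?_)
  gcongr
  · -- B1
    have hdisj : Disjoint ({s(v,u)} : Finset (Sym2 (Fin n))) (Evu.erase s(v,u)) := by
      simp [Finset.disjoint_singleton_left]
    rw [cylSet, gnp_cylinder hq0 hq1 _ _ hdisj, Finset.card_singleton, pow_one,
      Finset.card_erase_of_mem hsvu_mem, card_Evu hvu]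
    have : 2 * n - 3 - 1 = 2 * n - 4 := by omega
    rw [this]
  · -- the double union
    refine le_trans (measure_biUnion_finset_le _ _) ?_
    have hbound : ∀ w ∈ s, gnp n q (⋃ x ∈ s, cylSet {s(v,w), s(u,x)}
        ((Evu.erase s(v,w)).erase s(u,x))) ≤
        (n-2 : ℕ) * (ENNReal.ofReal q ^ 2 * ENNReal.ofReal (1-q) ^ (2*n-5)) := by
      intro w hw
      have hn3 : 3 ≤ n := by
        have : 0 < s.card := Finset.card_pos.2 ⟨w, hw⟩
        omega
      rw [hmem_s] at hw
      refine le_trans (measure_biUnion_finset_le _ _) ?_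
      have hval : ∀ x ∈ s, gnp n q (cylSet {s(v,w), s(u,x)}
          ((Evu.erase s(v,w)).erase s(u,x))) =
          ENNReal.ofReal q ^ 2 * ENNReal.ofReal (1-q) ^ (2*n-5) := by
        intro x hx
        rw [hmem_s] at hx
        have hTne : s(v,w) ≠ s(u,x) := svw_ne_sux hvu hw.1
        have hvw_mem : s(v,w) ∈ Evu := Finset.mem_union_left _ (svw_mem_Ev hw.2)
        have hux_mem : s(u,x) ∈ Evu := Finset.mem_union_right _ (svw_mem_Ev hx.1)
        have hdisj : Disjoint ({s(v,w), s(u,x)} : Finset (Sym2 (Fin n)))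
            ((Evu.erase s(v,w)).erase s(u,x)) := by
          rw [Finset.disjoint_left]
          intro e heT heF
          rw [Finset.mem_insert, Finset.mem_singleton] at heT
          rw [Finset.mem_erase, Finset.mem_erase] at heF
          rcases heT with rfl | rfl
          · exact heF.2.1 rfl
          · exact heF.1 rfl
        rw [cylSet, gnp_cylinder hq0 hq1 _ _ hdisj]
        have hcardT : ({s(v,w), s(u,x)} : Finset (Sym2 (Fin n))).card = 2 := by
          rw [Finset.card_insert_of_notMem (by simpa using hTne), Finset.card_singleton]
        have hcardF : ((Evu.erase s(v,w)).erase s(u,x)).card = 2*n - 5 := by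
          rw [Finset.card_erase_of_mem (Finset.mem_erase.2 ⟨hTne.symm, hux_mem⟩),
            Finset.card_erase_of_mem hvw_mem, card_Evu hvu]
          omega
        rw [hcardT, hcardF]
      rw [Finset.sum_congr rfl hval, Finset.sum_const, hcards, nsmul_eq_mul]
    refine le_trans (Finset.sum_le_sum hbound) ?_
    rw [Finset.sum_const, hcards, nsmul_eq_mul, ← mul_assoc]
    refine le_of_eq ?_
    push_cast
    ring

end pairs

section cheby

lemma cheby {α : Type*} [Fintype α] (Wt Xf : α → ℝ) (hW : ∀ f, 0 ≤ Wt f)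
    (hS0 : ∑ f, Wt f = 1) {t m : ℝ} (hm : ∑ f, Wt f * Xf f = m) (ht : t < m) :
    ∑ f ∈ Finset.univ.filter (fun f => Xf f < t), Wt f ≤
      (∑ f, Wt f * (Xf f)^2 - m^2) / (m - t)^2 := by
  classical
  have hpos : 0 < (m - t)^2 := by nlinarith
  rw [le_div_iff₀ hpos, Finset.sum_mul]
  have h1 : ∀ f ∈ Finset.univ.filter (fun f => Xf f < t),
      Wt f * (m - t)^2 ≤ Wt f * (Xf f - m)^2 := by
    intro f hf
    rw [Finset.mem_filter] at hf
    have := hf.2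
    refine mul_le_mul_of_nonneg_left ?_ (hW f)
    nlinarith
  refine le_trans (Finset.sum_le_sum h1) (le_trans (Finset.sum_le_sum_of_subset_of_nonneg
    (Finset.filter_subset _ _) (fun f _ _ => mul_nonneg (hW f) (sq_nonneg _))) (le_of_eq ?_))
  have hexp : ∀ f, Wt f * (Xf f - m)^2 =
      Wt f * (Xf f)^2 - 2*m*(Wt f * Xf f) + m^2 * Wt f := fun f => by ring
  rw [Finset.sum_congr rfl (fun f _ => hexp f)]
  rw [Finset.sum_add_distrib, Finset.sum_sub_distrib, ← Finset.mul_sum, ← Finset.mul_sum,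
    hS0, hm]
  ring

end cheby

section key
variable {n : ℕ} {q : ℝ}

/-- number of degree-one vertices -/
noncomputable def Xn {n : ℕ} (f : Sym2 (Fin n) → Bool) : ℕ :=
  (Finset.univ.filter (fun v : Fin n => degCount f v = 1)).card

lemma sumW_eq (hq0 : 0 ≤ q) (hq1 : q ≤ 1) (S : Set (Sym2 (Fin n) → Bool)) :
    ∑ f ∈ Finset.univ.filter (· ∈ S), W q f = (gnp n q S).toReal := by
  rw [gnp_set hq0 hq1, ENNReal.toReal_ofReal
    (Finset.sum_nonneg fun f _ => W_nonneg hq0 hq1 f)]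

lemma sumW_pred (hq0 : 0 ≤ q) (hq1 : q ≤ 1) (P : (Sym2 (Fin n) → Bool) → Prop)
    [DecidablePred P] :
    ∑ f ∈ Finset.univ.filter P, W q f = (gnp n q {f | P f}).toReal := by
  rw [← sumW_eq hq0 hq1 {f | P f}]
  exact Finset.sum_congr (by ext f; simp) fun _ _ => rfl

lemma sum_W_one (hq0 : 0 ≤ q) (hq1 : q ≤ 1) : ∑ f : Sym2 (Fin n) → Bool, W q f = 1 := by
  have h := sumW_pred (n := n) hq0 hq1 (fun _ => True)
  rw [Finset.filter_true] at h
  rw [h]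
  have h2 : {f : Sym2 (Fin n) → Bool | True} = Set.univ := by ext; simp
  rw [h2, measure_univ, ENNReal.toReal_one]

lemma toReal_muDv (hq0 : 0 ≤ q) (hq1 : q ≤ 1) (v : Fin n) :
    (gnp n q {f | degCount f v = 1}).toReal = ((n-1:ℕ):ℝ) * (q * (1-q)^(n-2)) := by
  rw [mu_Dv hq0 hq1 v, ENNReal.toReal_mul, ENNReal.toReal_mul, ENNReal.toReal_pow,
    ENNReal.toReal_ofReal hq0, ENNReal.toReal_ofReal (by linarith), ENNReal.toReal_natCast]

/-- mean -/
noncomputable def mR (n : ℕ) (q : ℝ) : ℝ := (n:ℝ) * (((n-1:ℕ):ℝ) * (q * (1-q)^(n-2)))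

/-- pair bound -/
noncomputable def pairR (n : ℕ) (q : ℝ) : ℝ :=
  q * (1-q)^(2*n-4) + ((n-2:ℕ):ℝ)^2 * (q^2 * (1-q)^(2*n-5))

lemma E1_eq (hq0 : 0 ≤ q) (hq1 : q ≤ 1) :
    ∑ f : Sym2 (Fin n) → Bool, W q f * (Xn f : ℝ) = mR n q := by
  have hX : ∀ f : Sym2 (Fin n) → Bool, ((Xn f : ℕ) : ℝ) =
      ∑ v : Fin n, if degCount f v = 1 then (1:ℝ) else 0 := by
    intro f; rw [Finset.sum_boole, Xn]
  calc ∑ f, W q f * (Xn f : ℝ)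
      = ∑ f, ∑ v : Fin n, (if degCount f v = 1 then W q f else 0) := by
        refine Finset.sum_congr rfl fun f _ => ?_
        rw [hX, Finset.mul_sum]
        exact Finset.sum_congr rfl fun v _ => by split <;> simp
    _ = ∑ v : Fin n, ∑ f, (if degCount f v = 1 then W q f else 0) := Finset.sum_comm
    _ = ∑ v : Fin n, ∑ f ∈ Finset.univ.filter (fun f => degCount f v = 1), W q f := by
        exact Finset.sum_congr rfl fun v _ => (Finset.sum_filter _ _).symm
    _ = ∑ v : Fin n, ((n-1:ℕ):ℝ) * (q * (1-q)^(n-2)) := by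
        refine Finset.sum_congr rfl fun v _ => ?_
        rw [sumW_pred hq0 hq1, toReal_muDv hq0 hq1]
    _ = mR n q := by rw [Finset.sum_const, Finset.card_univ, Fintype.card_fin, nsmul_eq_mul, mR]

lemma E2_le (hq0 : 0 ≤ q) (hq1 : q ≤ 1) :
    ∑ f : Sym2 (Fin n) → Bool, W q f * ((Xn f : ℝ))^2 ≤
      mR n q + (n:ℝ) * (((n-1:ℕ):ℝ) * pairR n q) := by
  have hX : ∀ f : Sym2 (Fin n) → Bool, ((Xn f : ℕ) : ℝ) =
      ∑ v : Fin n, if degCount f v = 1 then (1:ℝ) else 0 := by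
    intro f; rw [Finset.sum_boole, Xn]
  have step1 : ∑ f : Sym2 (Fin n) → Bool, W q f * ((Xn f : ℝ))^2 =
      ∑ v : Fin n, ∑ u : Fin n, ∑ f ∈ Finset.univ.filter
        (fun f => degCount f v = 1 ∧ degCount f u = 1), W q f := by
    calc ∑ f, W q f * ((Xn f : ℝ))^2
        = ∑ f, ∑ v : Fin n, ∑ u : Fin n,
            (if degCount f v = 1 ∧ degCount f u = 1 then W q f else 0) := by
          refine Finset.sum_congr rfl fun f _ => ?_
          rw [sq, hX, Finset.sum_mul_sum, Finset.mul_sum]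
          refine Finset.sum_congr rfl fun v _ => ?_
          rw [Finset.mul_sum]
          refine Finset.sum_congr rfl fun u _ => ?_
          by_cases h1 : degCount f v = 1 <;> by_cases h2 : degCount f u = 1 <;>
            simp [h1, h2]
      _ = ∑ v : Fin n, ∑ u : Fin n, ∑ f,
            (if degCount f v = 1 ∧ degCount f u = 1 then W q f else 0) := by
          rw [Finset.sum_comm]
          exact Finset.sum_congr rfl fun v _ => Finset.sum_comm
      _ = _ := by
          refine Finset.sum_congr rfl fun v _ => Finset.sum_congr rfl fun u _ => ?_
          exact (Finset.sum_filter _ _).symm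
  rw [step1]
  have hdiag : ∀ v : Fin n, ∑ f ∈ Finset.univ.filter
      (fun f => degCount f v = 1 ∧ degCount f v = 1), W q f =
      ((n-1:ℕ):ℝ) * (q * (1-q)^(n-2)) := by
    intro v
    rw [sumW_pred hq0 hq1]
    rw [show {f : Sym2 (Fin n) → Bool | degCount f v = 1 ∧ degCount f v = 1} =
      {f : Sym2 (Fin n) → Bool | degCount f v = 1} by ext; simp]
    rw [toReal_muDv hq0 hq1]
  have hoff : ∀ v u : Fin n, v ≠ u → ∑ f ∈ Finset.univ.filter
      (fun f => degCount f v = 1 ∧ degCount f u = 1), W q f ≤ pairR n q := by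
    intro v u hvu
    rw [sumW_pred hq0 hq1]
    rw [show {f : Sym2 (Fin n) → Bool | degCount f v = 1 ∧ degCount f u = 1} =
      ({f : Sym2 (Fin n) → Bool | degCount f v = 1} ∩ {f | degCount f u = 1}) by
        ext; simp [Set.mem_inter_iff]]
    have hb := mu_pair_le hq0 hq1 hvu
    have hfin : (ENNReal.ofReal q * ENNReal.ofReal (1-q) ^ (2*n-4) +
        ((n-2 : ℕ))^2 * (ENNReal.ofReal q ^ 2 * ENNReal.ofReal (1-q) ^ (2*n-5))) ≠ ⊤ := by
      refine ENNReal.add_ne_top.2 ⟨?_, ?_⟩ <;>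
        exact ENNReal.mul_ne_top (by first
            | exact ENNReal.ofReal_ne_top
            | exact ENNReal.natCast_ne_top _
            | exact ENNReal.pow_ne_top (ENNReal.natCast_ne_top _))
          (by first
            | exact ENNReal.pow_ne_top ENNReal.ofReal_ne_top
            | exact ENNReal.mul_ne_top (ENNReal.pow_ne_top ENNReal.ofReal_ne_top)
                (ENNReal.pow_ne_top ENNReal.ofReal_ne_top))
    refine le_trans (ENNReal.toReal_mono hfin hb) (le_of_eq ?_)
    rw [ENNReal.toReal_add (ENNReal.mul_ne_top ENNReal.ofReal_ne_top
        (ENNReal.pow_ne_top ENNReal.ofReal_ne_top))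
      (ENNReal.mul_ne_top (ENNReal.pow_ne_top (ENNReal.natCast_ne_top _))
        (ENNReal.mul_ne_top (ENNReal.pow_ne_top ENNReal.ofReal_ne_top)
          (ENNReal.pow_ne_top ENNReal.ofReal_ne_top)))]
    rw [ENNReal.toReal_mul, ENNReal.toReal_mul, ENNReal.toReal_mul, ENNReal.toReal_pow,
      ENNReal.toReal_pow, ENNReal.toReal_pow, ENNReal.toReal_ofReal hq0,
      ENNReal.toReal_ofReal (by linarith : (0:ℝ) ≤ 1 - q), ENNReal.toReal_natCast, pairR]
    rw [ENNReal.toReal_pow, ENNReal.toReal_ofReal (by linarith : (0:ℝ) ≤ 1 - q)]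
  have hsum : ∀ v : Fin n, ∑ u : Fin n, ∑ f ∈ Finset.univ.filter
      (fun f => degCount f v = 1 ∧ degCount f u = 1), W q f ≤
      ((n-1:ℕ):ℝ) * (q * (1-q)^(n-2)) + ((n-1:ℕ):ℝ) * pairR n q := by
    intro v
    rw [← Finset.add_sum_erase _ _ (Finset.mem_univ v)]
    refine add_le_add (le_of_eq (hdiag v)) ?_
    refine le_trans (Finset.sum_le_sum (fun u hu => hoff v u
      (Ne.symm (Finset.mem_erase.1 hu).1))) ?_
    rw [Finset.sum_const, Finset.card_erase_of_mem (Finset.mem_univ v), Finset.card_univ,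
      Fintype.card_fin, nsmul_eq_mul]
  refine le_trans (Finset.sum_le_sum (fun v _ => hsum v)) (le_of_eq ?_)
  rw [Finset.sum_const, Finset.card_univ, Fintype.card_fin, nsmul_eq_mul, mR]
  ring

lemma key (hq0 : 0 ≤ q) (hq1 : q ≤ 1) {t : ℝ} (ht : t < mR n q) :
    gnp n q {f : Sym2 (Fin n) → Bool | ((Xn f : ℝ)) < t} ≤
      ENNReal.ofReal (((n:ℝ) * (((n-1:ℕ):ℝ) * pairR n q) + mR n q - (mR n q)^2)
        / (mR n q - t)^2) := by
  have hch := cheby (W (n := n) q) (fun f => (Xn f : ℝ)) (W_nonneg hq0 hq1)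
    (sum_W_one hq0 hq1) (E1_eq hq0 hq1) ht
  have hset := sumW_pred (n := n) hq0 hq1 (fun f => ((Xn f : ℝ)) < t)
  rw [gnp_set hq0 hq1]
  refine ENNReal.ofReal_le_ofReal ?_
  rw [show (Finset.univ.filter (· ∈ {f : Sym2 (Fin n) → Bool | ((Xn f : ℝ)) < t})) =
    Finset.univ.filter (fun f => ((Xn f : ℝ)) < t) from Finset.filter_congr (by simp)]
  refine le_trans hch ?_
  have hden : 0 < (mR n q - t)^2 := by nlinarith
  have hnum : (∑ f : Sym2 (Fin n) → Bool, W q f * ((Xn f : ℝ))^2) - (mR n q)^2 ≤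
      (n:ℝ) * (((n-1:ℕ):ℝ) * pairR n q) + mR n q - (mR n q)^2 := by
    have := E2_le (n := n) hq0 hq1
    linarith
  exact (div_le_div_iff_of_pos_right hden).2 hnum

end key

section dom

lemma dom_le {n : ℕ} (f : Sym2 (Fin n) → Bool) :
    (domNumber (graphOf f) : ℝ) ≤ (n:ℝ) - (Xn f : ℝ)/2 := by
  classical
  set G := graphOf f with hG
  set L : Finset (Fin n) := Finset.univ.filter (fun v => degCount f v = 1) with hL
  set nb : Fin n → Fin n := fun v =>
    if h : ∃ a, Finset.univ.filter (fun w => G.Adj v w) = {a} then h.choose else v with hnb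
  have hfil : ∀ v ∈ L, Finset.univ.filter (fun w => G.Adj v w) = {nb v} := by
    intro v hv
    rw [hL, Finset.mem_filter] at hv
    have h : ∃ a, Finset.univ.filter (fun w => G.Adj v w) = {a} :=
      Finset.card_eq_one.1 hv.2
    rw [hnb]
    simp only [dif_pos h]
    exact h.choose_spec
  have hAdj : ∀ v ∈ L, G.Adj v (nb v) := by
    intro v hv
    have : nb v ∈ Finset.univ.filter (fun w => G.Adj v w) := by
      rw [hfil v hv]; exact Finset.mem_singleton_self _
    exact (Finset.mem_filter.1 this).2
  have hUniq : ∀ v ∈ L, ∀ w, G.Adj v w → w = nb v := by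
    intro v hv w hw
    have : w ∈ Finset.univ.filter (fun w => G.Adj v w) :=
      Finset.mem_filter.2 ⟨Finset.mem_univ _, hw⟩
    rw [hfil v hv] at this
    exact Finset.mem_singleton.1 this
  have hInv : ∀ v ∈ L, nb v ∈ L → nb (nb v) = v := by
    intro v hv hnv
    exact (hUniq (nb v) hnv v (hAdj v hv).symm).symm
  set L' : Finset (Fin n) := L.filter (fun v => nb v ∉ L ∨ v < nb v) with hL'
  -- cardinality
  have hcard : L.card ≤ 2 * L'.card := by
    have hinj : (L.filter (fun v => ¬(nb v ∉ L ∨ v < nb v))).card ≤ L'.card := by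
      refine Finset.card_le_card_of_injOn nb ?_ ?_
      · intro v hv
        rw [Finset.mem_coe, Finset.mem_filter, not_or, not_not, not_lt] at hv
        obtain ⟨hvL, hnvL, hle⟩ := hv
        have hne : nb v ≠ v := by
          intro h
          have hadj := hAdj v hvL
          rw [h] at hadj
          exact G.loopless.irrefl v hadj
        have hlt : nb v < v := lt_of_le_of_ne hle hne
        rw [hL', Finset.mem_coe, Finset.mem_filter]
        refine ⟨hnvL, Or.inr ?_⟩
        rw [hInv v hvL hnvL]
        exact hlt
      · intro v1 h1 v2 h2 heq
        rw [Finset.coe_filter, Set.mem_setOf_eq, not_or, not_not] at h1 h2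
        rw [← hInv v1 h1.1 h1.2.1, ← hInv v2 h2.1 h2.2.1, heq]
    have hnotEq : L.filter (fun v => ¬(nb v ∉ L ∨ v < nb v)) = L \ L' :=
      Finset.filter_not _ _
    rw [hnotEq, Finset.card_sdiff_of_subset (Finset.filter_subset _ _)] at hinj
    have hle : L'.card ≤ L.card := Finset.card_filter_le _ _
    have hfold : (L.filter (fun v => nb v ∉ L ∨ v < nb v)).card = L'.card := rfl
    omega
  -- dominating set
  set S : Finset (Fin n) := Finset.univ \ L' with hS
  have hdom : IsDominating G ↑S := by
    intro v
    by_cases hv : v ∈ L'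
    · right
      rw [hL', Finset.mem_filter] at hv
      obtain ⟨hvL, hcond⟩ := hv
      refine ⟨nb v, ?_, (hAdj v hvL).symm⟩
      rw [hS, Finset.coe_sdiff, Set.mem_diff]
      refine ⟨by simp, ?_⟩
      intro hnv'
      simp only [Finset.mem_coe] at hnv'
      rw [hL', Finset.mem_filter] at hnv'
      obtain ⟨hnvL, hcond2⟩ := hnv'
      have hlt1 : v < nb v := hcond.resolve_left (fun h => h hnvL)
      have hinv := hInv v hvL hnvL
      rw [hinv] at hcond2
      have hlt2 : nb v < v := hcond2.resolve_left (fun h => h hvL)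
      exact absurd hlt1 (not_lt.2 hlt2.le)
    · left
      rw [hS, Finset.coe_sdiff, Set.mem_diff]
      exact ⟨by simp, fun h => hv (Finset.mem_coe.1 h)⟩
  have hdnum : domNumber G ≤ S.card :=
    Nat.sInf_le ⟨S, rfl, hdom⟩
  have hScard : S.card = n - L'.card := by
    rw [hS, Finset.card_sdiff_of_subset (Finset.subset_univ _), Finset.card_univ, Fintype.card_fin]
  have hL'n : L'.card ≤ n := by
    refine le_trans (Finset.card_le_card (Finset.filter_subset _ _)) ?_
    refine le_trans (Finset.card_le_card (Finset.filter_subset _ _)) ?_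
    simp
  have hXnL : Xn f = L.card := rfl
  have h1 : (domNumber G : ℝ) ≤ (n:ℝ) - (L'.card : ℝ) := by
    have := hdnum
    rw [hScard] at this
    have h2 : ((n - L'.card : ℕ) : ℝ) = (n:ℝ) - (L'.card:ℝ) := by
      rw [Nat.cast_sub hL'n]
    calc (domNumber G : ℝ) ≤ ((n - L'.card : ℕ) : ℝ) := Nat.cast_le.2 this
      _ = _ := h2
  have h3 : (Xn f : ℝ) ≤ 2 * (L'.card : ℝ) := by
    rw [hXnL]
    exact_mod_cast hcard
  linarith

end dom

section pern

lemma exp_le_one_sub {q : ℝ} (hq0 : 0 ≤ q) (hq : q ≤ 1/2) : Real.exp (-2*q) ≤ 1 - q := by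
  have hpos : (0:ℝ) < 1 - q := by linarith
  have hlog := Real.one_sub_inv_le_log_of_pos hpos
  have hinv : (1-q)⁻¹ ≤ 1 + 2*q := by
    rw [inv_le_iff_one_le_mul₀ hpos]
    nlinarith
  have h2 : -2*q ≤ Real.log (1-q) := by linarith
  calc Real.exp (-2*q) ≤ Real.exp (Real.log (1-q)) := Real.exp_le_exp.2 h2
    _ = 1 - q := Real.exp_log hpos

lemma perN (ε K : ℝ) (hε : 0 < ε) (hεK : ε ≤ K) (q : ℝ) (n : ℕ)
    (hn4 : 4 ≤ (n:ℝ)) (hnK : 2*K ≤ (n:ℝ)) (hql : ε/n ≤ q) (hqu : q ≤ K/n) :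
    gnp n q {f | (Xn f : ℝ) < ε/2*Real.exp (-2*K)*n} ≤
      ENNReal.ofReal ((16*(2*K + K^3)/(ε*Real.exp (-2*K))^2) / n) := by
  have hK0 : 0 < K := lt_of_lt_of_le hε hεK
  have hn0 : (0:ℝ) < n := by linarith
  have hq0 : 0 ≤ q := le_trans (div_pos hε hn0).le hql
  have hqn : q * n ≤ K := by
    rw [le_div_iff₀ hn0] at hqu
    · exact hqu
  have hqu' : q ≤ K/n := by rw [le_div_iff₀ hn0]; exact hqn
  have hqhalf : q ≤ 1/2 := by
    refine hqu'.trans ?_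
    rw [div_le_iff₀ hn0]
    linarith
  have hq1 : q ≤ 1 := by linarith
  have ha0 : (0:ℝ) ≤ 1 - q := by linarith
  have hE0 : 0 < Real.exp (-2*K) := Real.exp_pos _
  set c := ε * Real.exp (-2*K) with hc
  have hc0 : 0 < c := mul_pos hε hE0
  have hn4' : 4 ≤ n := by exact_mod_cast hn4
  have hn1R : ((n-1:ℕ):ℝ) = (n:ℝ) - 1 := by
    rw [Nat.cast_sub (by omega)]; norm_num
  have hn2R : ((n-2:ℕ):ℝ) = (n:ℝ) - 2 := by
    rw [Nat.cast_sub (by omega)]; norm_num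
  have hpow1 : ∀ j : ℕ, (1-q)^j ≤ 1 := fun j => pow_le_one₀ ha0 (by linarith)
  -- (1-q)^(n-2) ≥ exp(-2K)
  have hpow : Real.exp (-2*K) ≤ (1-q)^(n-2) := by
    have h1 : Real.exp (-2*q) ^ (n-2) ≤ (1-q)^(n-2) :=
      pow_le_pow_left₀ (Real.exp_pos _).le (exp_le_one_sub hq0 hqhalf) _
    have h2 : Real.exp (-2*K) ≤ Real.exp (-2*q) ^ (n-2) := by
      rw [← Real.exp_nat_mul]
      refine Real.exp_le_exp.2 ?_
      have hA : ((n-2:ℕ):ℝ) * q ≤ K := by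
        rw [hn2R]
        nlinarith
      nlinarith [hA]
    exact h2.trans h1
  -- mean lower bound
  have hmlow : c * ((n:ℝ) - 1) ≤ mR n q := by
    rw [mR, hn1R]
    have h1 : (ε/n) * Real.exp (-2*K) ≤ q * (1-q)^(n-2) :=
      mul_le_mul hql hpow hE0.le hq0
    have hn1nn : (0:ℝ) ≤ (n:ℝ) - 1 := by linarith
    calc c * ((n:ℝ)-1) = (n:ℝ) * (((n:ℝ)-1) * ((ε/n) * Real.exp (-2*K))) := by
          field_simp
          rw [hc]; ring
      _ ≤ (n:ℝ) * (((n:ℝ)-1) * (q * (1-q)^(n-2))) :=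
          mul_le_mul_of_nonneg_left (mul_le_mul_of_nonneg_left h1 hn1nn) hn0.le
  set t := ε/2*Real.exp (-2*K)*(n:ℝ) with hT
  have htc : t = c/2 * n := by rw [hT, hc]; ring
  have hmt : c/4 * n ≤ mR n q - t := by
    rw [htc]
    nlinarith [hmlow, hc0]
  have htlt : t < mR n q := by nlinarith [hmt, hc0, hn0]
  refine le_trans (key hq0 hq1 htlt) (ENNReal.ofReal_le_ofReal ?_)
  set C := 2*K + K^3 with hC
  -- bound on single terms
  have hterm : ∀ j : ℕ, (n:ℝ) * (((n-1:ℕ):ℝ) * (q * (1-q)^j)) ≤ K * n := by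
    intro j
    rw [hn1R]
    have hd0 : 0 ≤ q * (1-q)^j := mul_nonneg hq0 (pow_nonneg ha0 j)
    have hd1 : q * (1-q)^j ≤ K/n := by
      calc q * (1-q)^j ≤ q * 1 := mul_le_mul_of_nonneg_left (hpow1 j) hq0
        _ = q := mul_one q
        _ ≤ K/n := hqu'
    have e2 : (n:ℝ)*(((n:ℝ)-1)*(q*(1-q)^j)) ≤ (n:ℝ)*((n:ℝ)*(q*(1-q)^j)) :=
      mul_le_mul_of_nonneg_left
        (mul_le_mul_of_nonneg_right (by linarith) hd0) hn0.le
    have e4 : (n:ℝ)*((n:ℝ)*(q*(1-q)^j)) ≤ (n:ℝ)*((n:ℝ)*(K/n)) := by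
      refine mul_le_mul_of_nonneg_left (mul_le_mul_of_nonneg_left hd1 hn0.le) hn0.le
    have e5 : (n:ℝ)*((n:ℝ)*(K/n)) = K*n := by field_simp
    linarith
  have hmub : mR n q ≤ K * n := by rw [mR]; exact hterm _
  -- third term minus square
  have hthird : (n:ℝ) * (((n-1:ℕ):ℝ) * (((n-2:ℕ):ℝ)^2 * (q^2 * (1-q)^(2*n-5))))
      - (mR n q)^2 ≤ K^3 * n := by
    rw [hn1R, hn2R, mR, hn1R]
    set N := (n:ℝ) with hN
    have hsq2 : ((1-q)^(n-2))^2 = (1-q)^(2*n-5) * (1-q) := by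
      rw [← pow_mul, ← pow_succ]
      congr 1
      omega
    rw [show (N*((N-1)*(q*(1-q)^(n-2))))^2 = N^2*(N-1)^2*q^2*(((1-q)^(n-2))^2) from by ring,
      hsq2]
    set A := (1-q)^(2*n-5) with hA
    have hA0 : 0 ≤ A := pow_nonneg ha0 _
    have hA1 : A ≤ 1 := hpow1 _
    have hL : N*((N-1)*((N-2)^2*(q^2*A))) - N^2*(N-1)^2*q^2*(A*(1-q))
        = q^2*A*(N*(N-1)*(N-2)^2 - N^2*(N-1)^2*(1-q)) := by ring
    rw [hL]
    have hb1 : N*(N-1)*((N-2)^2 - N*(N-1)) ≤ 0 := by nlinarith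
    have hb2 : N^2*(N-1)^2*q ≤ N^4*q := by nlinarith
    have hbr : N*(N-1)*(N-2)^2 - N^2*(N-1)^2*(1-q) ≤ N^4*q := by
      have hid : N*(N-1)*(N-2)^2 - N^2*(N-1)^2*(1-q)
          = N*(N-1)*((N-2)^2 - N*(N-1)) + N^2*(N-1)^2*q := by ring
      linarith [hid ▸ le_refl (N*(N-1)*(N-2)^2 - N^2*(N-1)^2*(1-q))]
    calc q^2*A*(N*(N-1)*(N-2)^2 - N^2*(N-1)^2*(1-q)) ≤ q^2*A*(N^4*q) :=
          mul_le_mul_of_nonneg_left hbr (by positivity)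
      _ = q^3*N^4*A := by ring
      _ ≤ q^3*N^4*1 := mul_le_mul_of_nonneg_left hA1 (by positivity)
      _ = q^3*N^4 := mul_one _
      _ ≤ (K/N)^3*N^4 := by
          refine mul_le_mul_of_nonneg_right (pow_le_pow_left₀ hq0 hqu' 3) (by positivity)
      _ = K^3*N := by field_simp
  have hnum : (n:ℝ)*(((n-1:ℕ):ℝ)*pairR n q) + mR n q - (mR n q)^2 ≤ C*n := by
    rw [pairR]
    have expand : (n:ℝ)*(((n-1:ℕ):ℝ)*(q*(1-q)^(2*n-4) + ((n-2:ℕ):ℝ)^2*(q^2*(1-q)^(2*n-5))))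
        = (n:ℝ)*(((n-1:ℕ):ℝ)*(q*(1-q)^(2*n-4)))
          + (n:ℝ)*(((n-1:ℕ):ℝ)*(((n-2:ℕ):ℝ)^2*(q^2*(1-q)^(2*n-5)))) := by ring
    rw [expand, hC]
    have := hterm (2*n-4)
    linarith [hmub, hthird]
  have hden : (c/4*(n:ℝ))^2 ≤ (mR n q - t)^2 := by
    have h0 : (0:ℝ) ≤ c/4*n := by positivity
    exact pow_le_pow_left₀ h0 hmt 2
  have hC0 : 0 ≤ C*(n:ℝ) := by
    rw [hC]; positivity
  have hdiv : ((n:ℝ)*(((n-1:ℕ):ℝ)*pairR n q) + mR n q - (mR n q)^2)/(mR n q - t)^2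
      ≤ (C*n)/((c/4*(n:ℝ))^2) := div_le_div₀ hC0 hnum (by positivity) hden
  refine hdiv.trans (le_of_eq ?_)
  rw [hC, hc]
  field_simp
  ring

end pern

end aux

/-- if `ε/n ≤ p ≤ K/n` with `0 < ε ≤ K`, then a.a.s. `G(n,p)` has at
least `(ε/2) e^{-2K} n` vertices of degree exactly `1`, and consequently a.a.s.
`D(G(n,p)) ≤ (1 - (ε/4) e^{-2K}) n`. -/

theorem stmt_19 (ε K : ℝ) (hε : 0 < ε) (hεK : ε ≤ K)
    (p : ℕ → ℝ) (hp : ∀ n : ℕ, ε / n ≤ p n ∧ p n ≤ K / n) :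
    Tendsto (fun n : ℕ => gnp n (p n)
        {f | ε / 2 * Real.exp (-2 * K) * n ≤
              ((Finset.univ.filter (fun v : Fin n =>
                (Finset.univ.filter (fun w : Fin n => (graphOf f).Adj v w)).card = 1)).card
                : ℝ)}) atTop (nhds 1) ∧
    Tendsto (fun n : ℕ => gnp n (p n)
        {f | (domNumber (graphOf f) : ℝ) ≤ (1 - ε / 4 * Real.exp (-2 * K)) * n})
      atTop (nhds 1) := by
  have hK0 : 0 < K := lt_of_lt_of_le hε hεK
  set S1 : (n : ℕ) → Set (Sym2 (Fin n) → Bool) := fun n =>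
    {f | ε / 2 * Real.exp (-2 * K) * n ≤ ((Xn f : ℕ) : ℝ)} with hS1
  have hS1eq : ∀ n : ℕ, {f : Sym2 (Fin n) → Bool | ε / 2 * Real.exp (-2 * K) * n ≤
      ((Finset.univ.filter (fun v : Fin n =>
        (Finset.univ.filter (fun w : Fin n => (graphOf f).Adj v w)).card = 1)).card : ℝ)}
      = S1 n := by
    intro n
    ext f
    simp only [hS1, Set.mem_setOf_eq, Xn, degCount]
    congr!
  have hmeas : ∀ (n : ℕ) (S : Set (Sym2 (Fin n) → Bool)), MeasurableSet S := by
    intro n S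
    exact (Set.toFinite S).measurableSet
  -- first statement
  have h1 : Tendsto (fun n : ℕ => gnp n (p n) (S1 n)) atTop (nhds 1) := by
    set C' : ℝ := 16*(2*K + K^3)/(ε*Real.exp (-2*K))^2 with hC'
    have hcompl : ∀ᶠ n : ℕ in atTop, gnp n (p n) ((S1 n)ᶜ) ≤ ENNReal.ofReal (C'/n) := by
      filter_upwards [eventually_ge_atTop (max 4 (Nat.ceil (2*K)))] with n hn
      have hn4 : 4 ≤ (n:ℝ) := by
        have := le_trans (le_max_left 4 _) hn
        exact_mod_cast this
      have hnK : 2*K ≤ (n:ℝ) := by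
        have h := le_trans (le_max_right (4:ℕ) _) hn
        calc 2*K ≤ (Nat.ceil (2*K) : ℝ) := Nat.le_ceil _
          _ ≤ (n:ℝ) := by exact_mod_cast h
      have hcs : (S1 n)ᶜ = {f : Sym2 (Fin n) → Bool |
          (Xn f : ℝ) < ε/2*Real.exp (-2*K)*n} := by
        ext f
        simp only [hS1, Set.mem_compl_iff, Set.mem_setOf_eq, not_le]
      rw [hcs]
      exact perN ε K hε hεK (p n) n hn4 hnK (hp n).1 (hp n).2
    have hbound0 : Tendsto (fun n : ℕ => ENNReal.ofReal (C'/n)) atTop (nhds 0) := by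
      have hreal : Tendsto (fun n : ℕ => C'/n) atTop (nhds 0) :=
        tendsto_const_div_atTop_nhds_zero_nat C'
      have := (ENNReal.continuous_ofReal.tendsto 0).comp hreal
      rw [ENNReal.ofReal_zero] at this
      exact this
    have htend0 : Tendsto (fun n : ℕ => gnp n (p n) ((S1 n)ᶜ)) atTop (nhds 0) := by
      refine tendsto_of_tendsto_of_tendsto_of_le_of_le' tendsto_const_nhds hbound0
        (Eventually.of_forall fun n => zero_le) hcompl
    have hrw : ∀ n : ℕ, gnp n (p n) (S1 n) = 1 - gnp n (p n) ((S1 n)ᶜ) := by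
      intro n
      have := prob_compl_eq_one_sub (μ := gnp n (p n)) (hmeas n (S1 n))
      rw [this]
      have hle : gnp n (p n) (S1 n) ≤ 1 := prob_le_one
      exact (ENNReal.sub_sub_cancel ENNReal.one_ne_top hle).symm
    simp only [hrw]
    have := ENNReal.Tendsto.sub (tendsto_const_nhds (x := (1:ENNReal))) htend0
      (Or.inl ENNReal.one_ne_top)
    simpa using this
  constructor
  · simpa only [hS1eq] using h1
  · have hsub : ∀ n : ℕ, S1 n ⊆
        {f : Sym2 (Fin n) → Bool | (domNumber (graphOf f) : ℝ) ≤
          (1 - ε / 4 * Real.exp (-2 * K)) * n} := by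
      intro n f hf
      rw [hS1, Set.mem_setOf_eq] at hf
      have hd := dom_le f
      rw [Set.mem_setOf_eq]
      have hn0 : (0:ℝ) ≤ n := Nat.cast_nonneg n
      nlinarith [hd, hf]
    refine tendsto_of_tendsto_of_tendsto_of_le_of_le h1 tendsto_const_nhds
      (fun n => measure_mono (hsub n)) (fun n => prob_le_one)
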